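/- Let T be a non-abelian finite simple group and let G = T^k.(Out(T) × S_k) be the diagonal type primitive group acting on Ω = Ω(k,T), with point stabiliser D. Then {D, D(φ_{t₁}, ..., φ_{t_k})} is a base for G if and only if t₁, ..., t_k ∈ T are pairwise distinct and the setwise stabiliser of {t₁, ..., t_k} in Hol(T) is trivial. -/

import Mathlib

def permMulAut {k : ℕ} (M : Type*) [Group M] :
    Equiv.Perm (Fin k) →* MulAut (Fin k → M) where
  toFun π :=
    { toFun := fun f => f ∘ π.symm
      invFun := fun f => f ∘ π
      left_inv := fun f => by funext i; simp
      right_inv := fun f => by funext i; simp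
      map_mul' := fun f g => rfl }
  map_one' := by
    apply MulEquiv.toMonoidHom_injective
    ext f i
    rfl
  map_mul' π₁ π₂ := by
    apply MulEquiv.toMonoidHom_injective
    ext f i
    rfl

abbrev DiagW (T : Type*) [Group T] (k : ℕ) :=
  SemidirectProduct (Fin k → MulAut T) (Equiv.Perm (Fin k)) (permMulAut (MulAut T))

lemma conj_mem_aux {T : Type*} [Group T] (β : MulAut T) {u : MulAut T}
    (hu : u ∈ (MulAut.conj (G := T)).range) :
    β * u * β⁻¹ ∈ (MulAut.conj (G := T)).range := by
  obtain ⟨g, rfl⟩ := hu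
  refine ⟨β g, ?_⟩
  ext x
  simp [MulAut.conj]

lemma conj_mem_aux' {T : Type*} [Group T] (β : MulAut T) {u : MulAut T}
    (hu : u ∈ (MulAut.conj (G := T)).range) :
    β⁻¹ * u * β ∈ (MulAut.conj (G := T)).range := by
  simpa using conj_mem_aux β⁻¹ hu

/-- The diagonal-type group `W(k,T) = T^k.(Out(T) × S_k)`: the subgroup of
`Aut(T)^k ⋊ S_k` of elements all of whose components lie in a common coset of
`Inn(T)`. -/
def diagWfull (T : Type*) [Group T] (k : ℕ) : Subgroup (DiagW T k) where
  carrier := {w | ∀ i j, (w.left i)⁻¹ * w.left j ∈ (MulAut.conj (G := T)).range}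
  one_mem' := by
    intro i j
    exact ⟨1, by simp⟩
  mul_mem' := by
    intro a b ha hb i j
    have hab : ∀ i, (a * b).left i = a.left i * b.left (a.right.symm i) := by
      intro i
      rw [SemidirectProduct.mul_left]
      rfl
    rw [hab i, hab j]
    have key : (a.left i * b.left (a.right.symm i))⁻¹ * (a.left j * b.left (a.right.symm j)) =
        ((b.left (a.right.symm i))⁻¹ * ((a.left i)⁻¹ * a.left j) * b.left (a.right.symm i)) *
          ((b.left (a.right.symm i))⁻¹ * b.left (a.right.symm j)) := by
      group
    rw [key]
    exact Subgroup.mul_mem _ (conj_mem_aux' _ (ha i j)) (hb _ _)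
  inv_mem' := by
    intro a ha i j
    have hai : ∀ i, (a⁻¹).left i = (a.left (a.right i))⁻¹ := by
      intro i
      rw [SemidirectProduct.inv_left]
      rfl
    rw [hai i, hai j]
    have key : ((a.left (a.right i))⁻¹)⁻¹ * (a.left (a.right j))⁻¹ =
        (a.left (a.right i)) *
          ((a.left (a.right j))⁻¹ * a.left (a.right i)) * (a.left (a.right i))⁻¹ := by
      group
    rw [key]
    exact conj_mem_aux _ (ha _ _)

/-- The diagonal subgroup `D = {(α,…,α)π}` of `Aut(T)^k ⋊ S_k`. -/
def diagD (T : Type*) [Group T] (k : ℕ) : Subgroup (DiagW T k) where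
  carrier := {w | ∀ i j, w.left i = w.left j}
  one_mem' := by intro i j; rfl
  mul_mem' := by
    intro a b ha hb i j
    have hab : ∀ i, (a * b).left i = a.left i * b.left (a.right.symm i) := by
      intro i
      rw [SemidirectProduct.mul_left]
      rfl
    rw [hab i, hab j, ha i j, hb (a.right.symm i) (a.right.symm j)]
  inv_mem' := by
    intro a ha i j
    have hai : ∀ i, (a⁻¹).left i = (a.left (a.right i))⁻¹ := by
      intro i
      rw [SemidirectProduct.inv_left]
      rfl
    rw [hai i, hai j, ha (a.right i) (a.right j)]

/-- The element of `W(k,T)` whose coset corresponds to the point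
`D(φ_{t₁},…,φ_{t_k})` of `Ω(k,T)` (recorded via right-to-left coset translation). -/
def diagPoint {T : Type*} [Group T] {k : ℕ} (t : Fin k → T) : ↥(diagWfull T k) :=
  ⟨SemidirectProduct.inl (fun i => MulAut.conj (t i)), by
    intro i j
    exact ⟨(t i)⁻¹ * t j, by rw [map_mul, map_inv]; rfl⟩⟩

/-- `{D, D(φ_{t₁},…,φ_{t_k})}` is a base for the diagonal type group
`G = T^k.(Out(T) × S_k)` acting on `Ω(k,T) = W/D` if and only if `t₁,…,t_k` are
pairwise distinct and the setwise stabiliser of `{t₁,…,t_k}` in `Hol(T)` is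
trivial. -/
lemma diag_mul_left {T : Type*} [Group T] {k : ℕ} (a b : DiagW T k) (i : Fin k) :
    (a * b).left i = a.left i * b.left (a.right.symm i) := by
  rw [SemidirectProduct.mul_left]; rfl

lemma diag_inv_left {T : Type*} [Group T] {k : ℕ} (a : DiagW T k) (i : Fin k) :
    (a⁻¹).left i = (a.left (a.right i))⁻¹ := by
  rw [SemidirectProduct.inv_left]; rfl

lemma center_triv {T : Type*} [Group T] [IsSimpleGroup T]
    (hnab : ¬ ∀ a b : T, a * b = b * a) {z : T} (hz : ∀ x : T, z * x = x * z) :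
    z = 1 := by
  rcases IsSimpleGroup.eq_bot_or_eq_top_of_normal (Subgroup.center T)
      inferInstance with h | h
  · have : z ∈ Subgroup.center T := Subgroup.mem_center_iff.mpr (fun g => (hz g).symm)
    simpa [h, Subgroup.mem_bot] using this
  · exact absurd (fun a b => by
      have : a ∈ Subgroup.center T := h ▸ Subgroup.mem_top a
      exact (Subgroup.mem_center_iff.mp this b).symm) hnab

lemma conj_injective' {T : Type*} [Group T] [IsSimpleGroup T]
    (hnab : ¬ ∀ a b : T, a * b = b * a) {a b : T}
    (h : MulAut.conj a = MulAut.conj b) : a = b := by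
  have hz : ∀ x : T, (b⁻¹ * a) * x = x * (b⁻¹ * a) := by
    intro x
    have h1 := congrArg (fun f : MulAut T => f x) h
    simp only [MulAut.conj_apply] at h1
    have h2 : b⁻¹ * (a * x * a⁻¹) * b = x := by rw [h1]; group
    calc (b⁻¹ * a) * x = (b⁻¹ * (a * x * a⁻¹) * b) * (b⁻¹ * a) := by group
    _ = x * (b⁻¹ * a) := by rw [h2]
  exact (inv_mul_eq_one.mp (center_triv hnab hz)).symm

lemma conj_comm_aux {T : Type*} [Group T] (β : MulAut T) (s : T) :
    (MulAut.conj s)⁻¹ * β = β * (MulAut.conj (β⁻¹ s))⁻¹ := by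
  ext x
  simp [MulAut.conj_apply, mul_assoc]

lemma mem_diagD_iff {T : Type*} [Group T] {k : ℕ} {x : DiagW T k} :
    x ∈ diagD T k ↔ ∀ i j, x.left i = x.left j := Iff.rfl

/-- The intermediate condition. -/
def Pcond {T : Type*} [Group T] {k : ℕ} (t : Fin k → T) : Prop :=
  ∀ (β : MulAut T) (π : Equiv.Perm (Fin k)),
    (∀ i j : Fin k, (β (t i))⁻¹ * t (π i) = (β (t j))⁻¹ * t (π j)) → β = 1 ∧ π = 1

lemma conjPoint_left {T : Type*} [Group T] {k : ℕ} (c : Fin k → MulAut T)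
    (W : DiagW T k) (i : Fin k) :
    ((SemidirectProduct.inl (φ := permMulAut (MulAut T)) c)⁻¹ * W *
        SemidirectProduct.inl (φ := permMulAut (MulAut T)) c).left i
      = (c i)⁻¹ * W.left i * c (W.right.symm i) := by
  rw [← map_inv]
  rw [diag_mul_left, diag_mul_left]
  simp [mul_assoc]
  rfl

lemma Pcond_iff_rhs {T : Type*} [Group T] {k : ℕ} (hk : 2 ≤ k) (t : Fin k → T) :
    Pcond t ↔
      (Function.Injective t ∧
        ∀ (g : T) (α : MulAut T),
          (fun x => α (g⁻¹ * x)) '' Set.range t = Set.range t → g = 1 ∧ α = 1) := by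
  have hk0 : 0 < k := by omega
  let i0 : Fin k := ⟨0, hk0⟩
  constructor
  · intro hP
    have hinj : Function.Injective t := by
      intro a b hab
      have hsw : ∀ i, t (Equiv.swap a b i) = t i := by
        intro i
        rcases eq_or_ne i a with rfl | hia
        · rw [Equiv.swap_apply_left, hab]
        · rcases eq_or_ne i b with rfl | hib
          · rw [Equiv.swap_apply_right, hab]
          · rw [Equiv.swap_apply_of_ne_of_ne hia hib]
      have h := hP 1 (Equiv.swap a b) (fun i j => by simp [hsw])
      have hswap1 := h.2
      have hba : b = a := by
        have := congrArg (fun e : Equiv.Perm (Fin k) => e a) hswap1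
        simpa [Equiv.swap_apply_left] using this
      exact hba.symm
    refine ⟨hinj, ?_⟩
    intro g α himg
    have hmem : ∀ i : Fin k, ∃ j : Fin k, t j = α (g⁻¹ * t i) := by
      intro i
      have : α (g⁻¹ * t i) ∈ Set.range t := by
        rw [← himg]
        exact Set.mem_image_of_mem _ (Set.mem_range_self i)
      exact this
    choose σ hσ using hmem
    have hσinj : Function.Injective σ := by
      intro a b hab
      apply hinj
      have h2 : α (g⁻¹ * t a) = α (g⁻¹ * t b) := by rw [← hσ a, ← hσ b, hab]
      have := α.injective h2
      exact mul_left_cancel this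
    let π : Equiv.Perm (Fin k) := Equiv.ofBijective σ
      (Finite.injective_iff_bijective.mp hσinj)
    have hπ : ∀ i, t (π i) = α (g⁻¹ * t i) := hσ
    set β : MulAut T := α * MulAut.conj g⁻¹ with hβ
    have hPh := hP β π (fun i j => by
      have hβi : ∀ i : Fin k, (β (t i))⁻¹ * t (π i) = α g⁻¹ := by
        intro i
        rw [hπ i]
        show (α (MulAut.conj g⁻¹ (t i)))⁻¹ * α (g⁻¹ * t i) = α g⁻¹
        rw [← map_inv, ← map_mul]
        congr 1
        simp [MulAut.conj_apply]
        group
      rw [hβi i, hβi j])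
    have hα : α = MulAut.conj g := by
      have := hPh.1
      have : α * MulAut.conj g⁻¹ = 1 := this
      calc α = α * MulAut.conj g⁻¹ * MulAut.conj g := by
            rw [mul_assoc, ← map_mul]; simp
      _ = MulAut.conj g := by rw [this, one_mul]
    have hπ1 : π = 1 := hPh.2
    have hfix : t i0 = α (g⁻¹ * t i0) := by
      rw [← hπ i0, hπ1]; rfl
    have hg : g = 1 := by
      rw [hα] at hfix
      simp only [MulAut.conj_apply] at hfix
      have h3 : t i0 * g = t i0 := by
        conv_lhs => rw [hfix]
        group
      exact mul_left_cancel (a := t i0) (by rw [h3, mul_one])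
    refine ⟨hg, ?_⟩
    rw [hα, hg]
    simp
  · rintro ⟨hinj, hstab⟩ β π hconst
    set c : T := (β (t i0))⁻¹ * t (π i0) with hc
    have ht : ∀ i, t (π i) = β (t i) * c := by
      intro i
      have := hconst i i0
      rw [← hc] at this
      rw [← this]
      group
    set α : MulAut T := (MulAut.conj c)⁻¹ * β with hα
    set g : T := (α⁻¹ c)⁻¹ with hg
    have hmap : (fun x => α (g⁻¹ * x)) = fun x => β x * c := by
      funext x
      have hg1 : g⁻¹ = α⁻¹ c := by rw [hg, inv_inv]
      rw [hg1, map_mul]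
      have h1 : α (α⁻¹ c) = c := α.apply_symm_apply c
      rw [h1]
      show c * (((MulAut.conj c)⁻¹ * β) x) = β x * c
      simp [MulAut.conj_apply, mul_assoc]
    have himg : (fun x => α (g⁻¹ * x)) '' Set.range t = Set.range t := by
      rw [hmap, ← Set.range_comp]
      have : ((fun x => β x * c) ∘ t) = t ∘ π := by
        funext i
        simp [Function.comp, ht i]
      rw [this, Set.range_comp, Equiv.range_eq_univ, Set.image_univ]
    obtain ⟨hg1, hα1⟩ := hstab g α himg
    have hc1 : c = 1 := by
      have h1 : (α⁻¹ c)⁻¹ = 1 := hg1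
      have h2 : α⁻¹ c = 1 := by rwa [inv_eq_one] at h1
      have h3 : α (α⁻¹ c) = c := α.apply_symm_apply c
      rw [h2, map_one] at h3
      exact h3.symm
    have hβ1 : β = 1 := by
      have : (MulAut.conj c)⁻¹ * β = 1 := hα1
      rw [hc1] at this
      simpa using this
    refine ⟨hβ1, Equiv.ext fun i => ?_⟩
    have hti := ht i
    rw [hβ1, hc1] at hti
    simp only [MulAut.one_apply, mul_one] at hti
    exact hinj hti

theorem stmt14 {T : Type*} [Group T] [Fintype T] [IsSimpleGroup T]
    (hnab : ¬ ∀ a b : T, a * b = b * a) {k : ℕ} (hk : 2 ≤ k) (t : Fin k → T) :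
    (∀ w : ↥(diagWfull T k),
        w • (QuotientGroup.mk (1 : ↥(diagWfull T k)) :
            ↥(diagWfull T k) ⧸ (diagD T k).subgroupOf (diagWfull T k)) =
          QuotientGroup.mk 1 →
        w • (QuotientGroup.mk (diagPoint t) :
            ↥(diagWfull T k) ⧸ (diagD T k).subgroupOf (diagWfull T k)) =
          QuotientGroup.mk (diagPoint t) →
        w = 1) ↔
      (Function.Injective t ∧
        ∀ (g : T) (α : MulAut T),
          (fun x => α (g⁻¹ * x)) '' Set.range t = Set.range t → g = 1 ∧ α = 1) := by
  rw [← Pcond_iff_rhs hk t]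
  have hk0 : 0 < k := by omega
  let i0 : Fin k := ⟨0, hk0⟩
  set H := (diagD T k).subgroupOf (diagWfull T k) with hH
  set p : ↥(diagWfull T k) := diagPoint t with hp
  set c : Fin k → MulAut T := fun i => MulAut.conj (t i) with hcdef
  have hpcoe : (p : DiagW T k) = SemidirectProduct.inl (φ := permMulAut (MulAut T)) c := rfl
  -- characterize condition 1
  have hcond1 : ∀ w : ↥(diagWfull T k),
      (w • (QuotientGroup.mk (1 : ↥(diagWfull T k)) : ↥(diagWfull T k) ⧸ H) =
        QuotientGroup.mk 1) ↔ ∀ i j, (w : DiagW T k).left i = (w : DiagW T k).left j := by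
    intro w
    rw [MulAction.Quotient.smul_mk, QuotientGroup.eq]
    have : (w • (1 : ↥(diagWfull T k)))⁻¹ * 1 = w⁻¹ := by
      simp [smul_eq_mul]
    rw [this, inv_mem_iff, Subgroup.mem_subgroupOf]
    exact mem_diagD_iff
  -- characterize condition 2
  have hcond2 : ∀ w : ↥(diagWfull T k),
      (w • (QuotientGroup.mk p : ↥(diagWfull T k) ⧸ H) = QuotientGroup.mk p) ↔
        ((p⁻¹ * w⁻¹ * p : ↥(diagWfull T k)) : DiagW T k) ∈ diagD T k := by
    intro w
    rw [MulAction.Quotient.smul_mk, QuotientGroup.eq]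
    have : (w • p)⁻¹ * p = p⁻¹ * w⁻¹ * p := by
      simp [smul_eq_mul, mul_inv_rev, mul_assoc]
    rw [this, Subgroup.mem_subgroupOf]
  constructor
  · -- base condition implies Pcond
    intro hbase β π hconst
    set W : DiagW T k := ⟨fun _ => β, π⟩ with hW
    have hWleft : ∀ i, W.left i = β := fun _ => rfl
    have hWright : W.right = π := rfl
    have hWmem : W ∈ diagWfull T k := by
      intro i j
      exact ⟨1, by simp [hWleft]⟩
    set w : ↥(diagWfull T k) := ⟨W, hWmem⟩ with hw
    have h1 : w • (QuotientGroup.mk (1 : ↥(diagWfull T k)) : ↥(diagWfull T k) ⧸ H) =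
        QuotientGroup.mk 1 := (hcond1 w).mpr (fun i j => rfl)
    have h2 : w • (QuotientGroup.mk p : ↥(diagWfull T k) ⧸ H) = QuotientGroup.mk p := by
      refine (hcond2 w).mpr ?_
      rw [mem_diagD_iff]
      intro i j
      have hcoe : ((p⁻¹ * w⁻¹ * p : ↥(diagWfull T k)) : DiagW T k)
          = (SemidirectProduct.inl (φ := permMulAut (MulAut T)) c)⁻¹ * W⁻¹ *
              SemidirectProduct.inl (φ := permMulAut (MulAut T)) c := by
        rw [← hpcoe]; rfl
      have hWinvleft : ∀ i, (W⁻¹).left i = β⁻¹ := by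
        intro i
        rw [diag_inv_left]
      have hWinvright : (W⁻¹).right = π⁻¹ := by
        rw [SemidirectProduct.inv_right, hWright]
      have hval : ∀ i, ((p⁻¹ * w⁻¹ * p : ↥(diagWfull T k)) : DiagW T k).left i =
          β⁻¹ * MulAut.conj ((β (t i))⁻¹ * t (π i)) := by
        intro i
        rw [hcoe, conjPoint_left, hWinvleft, hWinvright]
        have hsymm : (π⁻¹ : Equiv.Perm (Fin k)).symm i = π i := rfl
        rw [hsymm]
        have : (c i)⁻¹ * β⁻¹ = β⁻¹ * (MulAut.conj (β (t i)))⁻¹ := by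
          have := conj_comm_aux β⁻¹ (t i)
          simpa using this
        rw [this, map_mul, map_inv, mul_assoc]
      rw [hval i, hval j, hconst i j]
    have := hbase w h1 h2
    have hW1 : W = 1 := by
      rw [hw] at this
      exact congrArg Subtype.val this
    constructor
    · have := congrArg SemidirectProduct.left hW1
      exact congrFun this i0
    · exact congrArg SemidirectProduct.right hW1
  · -- Pcond implies base condition
    intro hP w h1 h2
    have hDleft := (hcond1 w).mp h1
    set W : DiagW T k := (w : DiagW T k) with hW
    set β : MulAut T := W.left i0 with hβ
    have hWleft : ∀ i, W.left i = β := fun i => hDleft i i0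
    set π : Equiv.Perm (Fin k) := W.right with hπ
    have hv := (hcond2 w).mp h2
    rw [mem_diagD_iff] at hv
    have hcoe : ((p⁻¹ * w⁻¹ * p : ↥(diagWfull T k)) : DiagW T k)
        = (SemidirectProduct.inl (φ := permMulAut (MulAut T)) c)⁻¹ * W⁻¹ *
            SemidirectProduct.inl (φ := permMulAut (MulAut T)) c := by
      rw [← hpcoe]; rfl
    have hWinvleft : ∀ i, (W⁻¹).left i = β⁻¹ := by
      intro i
      rw [diag_inv_left, hWleft]
    have hWinvright : (W⁻¹).right = π⁻¹ := SemidirectProduct.inv_right W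
    have hval : ∀ i, ((p⁻¹ * w⁻¹ * p : ↥(diagWfull T k)) : DiagW T k).left i =
        β⁻¹ * MulAut.conj ((β (t i))⁻¹ * t (π i)) := by
      intro i
      rw [hcoe, conjPoint_left, hWinvleft, hWinvright]
      have hsymm : (π⁻¹ : Equiv.Perm (Fin k)).symm i = π i := rfl
      rw [hsymm]
      have : (c i)⁻¹ * β⁻¹ = β⁻¹ * (MulAut.conj (β (t i)))⁻¹ := by
        have := conj_comm_aux β⁻¹ (t i)
        simpa using this
      rw [this, map_mul, map_inv, mul_assoc]
    have hconst : ∀ i j : Fin k, (β (t i))⁻¹ * t (π i) = (β (t j))⁻¹ * t (π j) := by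
      intro i j
      have := hv i j
      rw [hval i, hval j] at this
      have := mul_left_cancel this
      exact conj_injective' hnab this
    obtain ⟨hβ1, hπ1⟩ := hP β π hconst
    have hW1 : W = 1 := by
      refine SemidirectProduct.ext ?_ ?_
      · funext i
        rw [hWleft, hβ1]
        rfl
      · exact hπ1
    exact Subtype.ext hW1
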